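/- For nonnegative integers i, k and l with l ≤ k, the residue at u = 0 of the function u ↦ x^u / ((u+s)^{j+1} u^{k+1}) (for x > 1 and s ≠ 0, |s| larger than the radius of the small circle around 0) is ∑_{l=0}^{k} (-1)^l binom(j+l, j) (log x)^{k-l} / (s^{j+l+1} (k-l)!). That is, (1/2πi) ∮_{|u|=ρ} x^u du/((u+s)^{j+1} u^{k+1}) = ∑_{l ≤ k} (-1)^l binom(j+l, j) (log x)^{k-l} / (s^{j+l+1} (k-l)!) for 0 < ρ < |s|. -/

import Mathlib

open Complex Metric

private lemma sphere_ne_zero' {ρ : ℝ} (hρ : 0 < ρ) {u : ℂ} (hu : u ∈ sphere (0:ℂ) ρ) :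
    u ≠ 0 := by
  rw [mem_sphere_zero_iff_norm] at hu
  intro h
  rw [h, norm_zero] at hu
  exact hρ.ne' hu.symm

private lemma add_s_ne_zero' {s : ℂ} {ρ : ℝ} (hρs : ρ < ‖s‖) {u : ℂ}
    (hu : u ∈ closedBall (0:ℂ) ρ) : u + s ≠ 0 := by
  rw [mem_closedBall_zero_iff] at hu
  intro h
  have : s = -u := by linear_combination h
  rw [this, norm_neg] at hρs
  exact absurd (hu.trans_lt hρs) (lt_irrefl _)

private lemma cpow_diff' {x : ℝ} (hx : 1 < x) : Differentiable ℂ (fun u : ℂ => (x:ℂ) ^ u) :=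
  differentiable_id.const_cpow (Or.inl (by
    simp only [ne_eq, ofReal_eq_zero]; linarith))

private lemma hX' {x : ℝ} (hx : 1 < x) : (x:ℂ) ≠ 0 := by
  simp only [ne_eq, ofReal_eq_zero]; linarith

private lemma integrable_gen' {x : ℝ} (hx : 1 < x) (s : ℂ) {ρ : ℝ} (hρ : 0 < ρ)
    (hρs : ρ < ‖s‖) (a b : ℕ) :
    CircleIntegrable (fun u : ℂ => (x:ℂ) ^ u / ((u + s) ^ a * u ^ b)) 0 ρ := by
  apply ContinuousOn.circleIntegrable hρ.le
  apply ContinuousOn.div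
  · exact (cpow_diff' hx).continuous.continuousOn
  · fun_prop
  · intro u hu
    exact mul_ne_zero (pow_ne_zero _ (add_s_ne_zero' hρs (sphere_subset_closedBall hu)))
      (pow_ne_zero _ (sphere_ne_zero' hρ hu))

private lemma integrable_J' {x : ℝ} (hx : 1 < x) {ρ : ℝ} (hρ : 0 < ρ) (b : ℕ) :
    CircleIntegrable (fun u : ℂ => (x:ℂ) ^ u / u ^ b) 0 ρ := by
  apply ContinuousOn.circleIntegrable hρ.le
  apply ContinuousOn.div
  · exact (cpow_diff' hx).continuous.continuousOn
  · fun_prop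
  · exact fun u hu => pow_ne_zero _ (sphere_ne_zero' hρ hu)

/-- Cauchy's formula for `exp`: `∮ x^u/u^(m+1) = 2πi (log x)^m / m!`. -/
private lemma lemA' {x : ℝ} (hx : 1 < x) {ρ : ℝ} (hρ : 0 < ρ) (m : ℕ) :
    (∮ u in C(0, ρ), (x:ℂ) ^ u / u ^ (m + 1))
      = (2 * Real.pi * I) * (Complex.log (x:ℂ)) ^ m / (Nat.factorial m) := by
  induction m with
  | zero =>
      have hd : DifferentiableOn ℂ (fun u : ℂ => (x:ℂ) ^ u) (closedBall 0 ρ) :=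
        (cpow_diff' hx).differentiableOn
      have h := hd.circleIntegral_sub_inv_smul (mem_ball_self hρ)
      have heq : (∮ u in C(0, ρ), (x:ℂ) ^ u / u ^ (0 + 1))
          = ∮ z in C(0, ρ), (z - 0)⁻¹ • (x:ℂ) ^ z := by
        refine circleIntegral.integral_congr hρ.le fun u hu => ?_
        simp [div_eq_inv_mul, smul_eq_mul]
      rw [heq, h]
      simp [smul_eq_mul]
  | succ m ih =>
      have key : (∮ u in C(0, ρ),
          (Complex.log (x:ℂ) * ((x:ℂ) ^ u / u ^ (m + 1))
            - ((m:ℂ) + 1) * ((x:ℂ) ^ u / u ^ (m + 2)))) = 0 := by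
        apply circleIntegral.integral_eq_zero_of_hasDerivWithinAt hρ.le
        intro z hz
        have hz0 : z ≠ 0 := sphere_ne_zero' hρ hz
        have hnum : HasDerivAt (fun u : ℂ => (x:ℂ) ^ u)
            ((x:ℂ) ^ z * Complex.log (x:ℂ) * 1) z :=
          (hasDerivAt_id z).const_cpow (Or.inl (hX' hx))
        have hden : HasDerivAt (fun u : ℂ => u ^ (m + 1))
            (((m:ℂ) + 1) * z ^ m) z := by
          simpa using hasDerivAt_pow (m + 1) z
        have hdiv := hnum.div hden (pow_ne_zero _ hz0)
        have hval : ((x:ℂ) ^ z * Complex.log (x:ℂ) * 1 * z ^ (m + 1)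
              - (x:ℂ) ^ z * (((m:ℂ) + 1) * z ^ m)) / (z ^ (m + 1)) ^ 2
            = Complex.log (x:ℂ) * ((x:ℂ) ^ z / z ^ (m + 1))
              - ((m:ℂ) + 1) * ((x:ℂ) ^ z / z ^ (m + 2)) := by
          field_simp
          ring
        rw [hval] at hdiv
        exact hdiv.hasDerivWithinAt
      have h1 : CircleIntegrable (fun u : ℂ =>
          Complex.log (x:ℂ) * ((x:ℂ) ^ u / u ^ (m + 1))) 0 ρ :=
        (integrable_J' hx hρ (m + 1)).const_mul _
      have h2 : CircleIntegrable (fun u : ℂ =>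
          ((m:ℂ) + 1) * ((x:ℂ) ^ u / u ^ (m + 2))) 0 ρ :=
        (integrable_J' hx hρ (m + 2)).const_mul _
      rw [circleIntegral.integral_sub h1 h2, circleIntegral.integral_const_mul,
        circleIntegral.integral_const_mul, ih, sub_eq_zero] at key
      have hm1 : ((m:ℂ) + 1) ≠ 0 := Nat.cast_add_one_ne_zero m
      have hfac : ((Nat.factorial m : ℂ)) ≠ 0 := by
        exact_mod_cast Nat.factorial_ne_zero m
      have hfac1 : ((Nat.factorial (m+1) : ℂ)) ≠ 0 := by
        exact_mod_cast Nat.factorial_ne_zero (m+1)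
      have : (∮ u in C(0, ρ), (x:ℂ) ^ u / u ^ (m + 2))
          = Complex.log (x:ℂ) * (2 * Real.pi * I * Complex.log (x:ℂ) ^ m
              / (Nat.factorial m)) / ((m:ℂ) + 1) := by
        field_simp at key ⊢
        linear_combination -key
      rw [this]
      rw [Nat.factorial_succ]
      push_cast
      field_simp
      ring

/-- `G a 0 = 0` : no pole inside. -/
private lemma lemG0' {x : ℝ} (hx : 1 < x) (s : ℂ) {ρ : ℝ} (hρ : 0 < ρ) (hρs : ρ < ‖s‖) (a : ℕ) :
    (∮ u in C(0, ρ), (x:ℂ) ^ u / ((u + s) ^ a * u ^ 0)) = 0 := by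
  apply circleIntegral_eq_zero_of_differentiable_on_off_countable hρ.le Set.countable_empty
  · apply ContinuousOn.div
    · exact (cpow_diff' hx).continuous.continuousOn
    · fun_prop
    · intro u hu
      simpa using pow_ne_zero a (add_s_ne_zero' hρs hu)
  · intro z hz
    have hzs : z + s ≠ 0 := add_s_ne_zero' hρs (ball_subset_closedBall hz.1)
    apply DifferentiableAt.div
    · exact (cpow_diff' hx) z
    · fun_prop
    · simpa using pow_ne_zero a hzs

/-- The key recursion on the integrals. -/
private lemma lemRec' {x : ℝ} (hx : 1 < x) {s : ℂ} (hs : s ≠ 0) {ρ : ℝ} (hρ : 0 < ρ)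
    (hρs : ρ < ‖s‖) (a b : ℕ) :
    (∮ u in C(0, ρ), (x:ℂ) ^ u / ((u + s) ^ (a + 1) * u ^ (b + 1)))
      = s⁻¹ * ((∮ u in C(0, ρ), (x:ℂ) ^ u / ((u + s) ^ a * u ^ (b + 1)))
          - ∮ u in C(0, ρ), (x:ℂ) ^ u / ((u + s) ^ (a + 1) * u ^ b)) := by
  rw [eq_inv_mul_iff_mul_eq₀ hs, ← circleIntegral.integral_const_mul]
  rw [← circleIntegral.integral_sub (integrable_gen' hx s hρ hρs a (b+1))
    (integrable_gen' hx s hρ hρs (a+1) b)]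
  refine circleIntegral.integral_congr hρ.le fun u hu => ?_
  have hu0 : u ≠ 0 := sphere_ne_zero' hρ hu
  have hus : u + s ≠ 0 := add_s_ne_zero' hρs (sphere_subset_closedBall hu)
  field_simp
  ring

/-- `G 0 (m+1)` in the `(u+s)^0` form, with the real log. -/
private lemma lemG0b' {x : ℝ} (hx : 1 < x) (s : ℂ) {ρ : ℝ} (hρ : 0 < ρ) (m : ℕ) :
    (∮ u in C(0, ρ), (x:ℂ) ^ u / ((u + s) ^ (0:ℕ) * u ^ (m + 1)))
      = (2 * Real.pi * I) * ((Real.log x : ℂ)) ^ m / (Nat.factorial m) := by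
  have hL : ((Real.log x : ℝ) : ℂ) = Complex.log (x:ℂ) :=
    Complex.ofReal_log (by linarith)
  rw [hL, ← lemA' hx hρ m]
  refine circleIntegral.integral_congr hρ.le fun u hu => ?_
  simp

private lemma key_div' {s : ℂ} (hs : s ≠ 0) (X F : ℂ) (n : ℕ) :
    s * (X / (s ^ (n+1) * F)) = X / (s ^ n * F) := by
  rcases eq_or_ne F 0 with rfl | hF
  · simp
  · rw [mul_div_assoc']
    rw [div_eq_div_iff (mul_ne_zero (pow_ne_zero _ hs) hF) (mul_ne_zero (pow_ne_zero _ hs) hF)]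
    ring

/-- The target sum. -/
private noncomputable def Tsum (s L : ℂ) (j k : ℕ) : ℂ :=
  ∑ l ∈ Finset.range (k + 1),
    (-1) ^ l * ((j + l).choose j : ℂ) * L ^ (k - l) /
      (s ^ (j + l + 1) * ((k - l).factorial : ℂ))

private lemma sumRec' {s : ℂ} (hs : s ≠ 0) (L : ℂ) (j k : ℕ) :
    Tsum s L (j+1) (k+1) = s⁻¹ * (Tsum s L j (k+1) - Tsum s L (j+1) k) := by
  rw [eq_inv_mul_iff_mul_eq₀ hs]
  unfold Tsum
  rw [Finset.mul_sum, Finset.sum_range_succ' (fun l => s * _) (k+1),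
    Finset.sum_range_succ' (fun l =>
      (-1) ^ l * ((j + l).choose j : ℂ) * L ^ (k + 1 - l) /
        (s ^ (j + l + 1) * ((k + 1 - l).factorial : ℂ))) (k+1)]
  have hterm : ∀ l ∈ Finset.range (k+1),
      s * ((-1) ^ (l+1) * ((j + 1 + (l + 1)).choose (j+1) : ℂ) * L ^ (k + 1 - (l + 1)) /
          (s ^ (j + 1 + (l + 1) + 1) * ((k + 1 - (l + 1)).factorial : ℂ)))
        = (-1) ^ (l+1) * ((j + (l + 1)).choose j : ℂ) * L ^ (k + 1 - (l + 1)) /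
            (s ^ (j + (l + 1) + 1) * ((k + 1 - (l + 1)).factorial : ℂ))
          - (-1) ^ l * ((j + 1 + l).choose (j+1) : ℂ) * L ^ (k - l) /
              (s ^ (j + 1 + l + 1) * ((k - l).factorial : ℂ)) := by
    intro l hl
    have hp : ((j + 1 + (l + 1)).choose (j + 1) : ℂ)
        = ((j + l + 1).choose j : ℂ) + ((j + l + 1).choose (j + 1) : ℂ) := by
      rw [show j + 1 + (l + 1) = (j + l + 1) + 1 by ring]
      exact_mod_cast Nat.choose_succ_succ (j + l + 1) j
    have e3 : k + 1 - (l + 1) = k - l := by omega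
    rw [hp, e3, show j + (l + 1) = j + l + 1 by ring, show j + 1 + l = j + l + 1 by ring,
      show j + 1 + (l + 1) + 1 = j + l + 2 + 1 by ring,
      show j + l + 1 + 1 = j + l + 2 by ring, key_div' hs]
    ring
  rw [Finset.sum_congr rfl hterm, Finset.sum_sub_distrib]
  have h0 : s * ((-1 : ℂ) ^ 0 * ((j + 1 + 0).choose (j+1) : ℂ) * L ^ (k + 1 - 0) /
        (s ^ (j + 1 + 0 + 1) * ((k + 1 - 0).factorial : ℂ)))
      = (-1 : ℂ) ^ 0 * ((j + 0).choose j : ℂ) * L ^ (k + 1 - 0) /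
          (s ^ (j + 0 + 1) * ((k + 1 - 0).factorial : ℂ)) := by
    simp only [Nat.add_zero, Nat.choose_self, Nat.cast_one, Nat.sub_zero]
    rw [key_div' hs]
  rw [h0]
  ring

private lemma sumRec0' {s : ℂ} (hs : s ≠ 0) (L : ℂ) (k : ℕ) :
    Tsum s L 0 (k+1) = s⁻¹ * (L ^ (k+1) / ((k+1).factorial : ℂ) - Tsum s L 0 k) := by
  rw [eq_inv_mul_iff_mul_eq₀ hs]
  unfold Tsum
  rw [Finset.mul_sum, Finset.sum_range_succ' (fun l => s * _) (k+1)]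
  have hterm : ∀ l ∈ Finset.range (k+1),
      s * ((-1) ^ (l+1) * ((0 + (l + 1)).choose 0 : ℂ) * L ^ (k + 1 - (l + 1)) /
          (s ^ (0 + (l + 1) + 1) * ((k + 1 - (l + 1)).factorial : ℂ)))
        = -((-1) ^ l * ((0 + l).choose 0 : ℂ) * L ^ (k - l) /
            (s ^ (0 + l + 1) * ((k - l).factorial : ℂ))) := by
    intro l hl
    have e3 : k + 1 - (l + 1) = k - l := by omega
    simp only [Nat.zero_add, Nat.choose_zero_right, Nat.cast_one, e3]
    rw [key_div' hs]
    ring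
  rw [Finset.sum_congr rfl hterm, Finset.sum_neg_distrib]
  have h0 : s * ((-1 : ℂ) ^ 0 * ((0 + 0).choose 0 : ℂ) * L ^ (k + 1 - 0) /
        (s ^ (0 + 0 + 1) * ((k + 1 - 0).factorial : ℂ)))
      = L ^ (k + 1) / ((k+1).factorial : ℂ) := by
    rw [key_div' hs]
    simp
  rw [h0]
  ring

private lemma sumBase0' {s : ℂ} (hs : s ≠ 0) (L : ℂ) :
    Tsum s L 0 0 = s⁻¹ * (L ^ 0 / ((Nat.factorial 0 : ℕ) : ℂ) - 0) := by
  rw [eq_inv_mul_iff_mul_eq₀ hs, sub_zero]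
  unfold Tsum
  rw [Finset.sum_range_one, key_div' hs]
  norm_num

private lemma sumBaseRec' {s : ℂ} (hs : s ≠ 0) (L : ℂ) (j : ℕ) :
    Tsum s L (j+1) 0 = s⁻¹ * (Tsum s L j 0 - 0) := by
  rw [eq_inv_mul_iff_mul_eq₀ hs, sub_zero]
  unfold Tsum
  rw [Finset.sum_range_one, Finset.sum_range_one,
    show j + 1 + 0 + 1 = (j + 0 + 1) + 1 by ring, key_div' hs]
  simp [Nat.choose_self]

/-- Main computation. -/
private lemma lemMain' {x : ℝ} (hx : 1 < x) {s : ℂ} (hs : s ≠ 0) {ρ : ℝ} (hρ : 0 < ρ)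
    (hρs : ρ < ‖s‖) (j k : ℕ) :
    (∮ u in C(0, ρ), (x:ℂ) ^ u / ((u + s) ^ (j + 1) * u ^ (k + 1)))
      = (2 * Real.pi * I) * Tsum s (Real.log x : ℂ) j k := by
  induction j generalizing k with
  | zero =>
      induction k with
      | zero =>
          rw [lemRec' hx hs hρ hρs 0 0, lemG0b' hx s hρ 0, lemG0' hx s hρ hρs 1,
            sumBase0' hs]
          ring
      | succ k ih =>
          rw [lemRec' hx hs hρ hρs 0 (k+1), lemG0b' hx s hρ (k+1), ih,
            sumRec0' hs]
          ring
  | succ j ihj =>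
      induction k with
      | zero =>
          rw [lemRec' hx hs hρ hρs (j+1) 0, ihj 0, lemG0' hx s hρ hρs (j+2),
            sumBaseRec' hs]
          ring
      | succ k ihk =>
          rw [lemRec' hx hs hρ hρs (j+1) (k+1), ihj (k+1), ihk,
            sumRec' hs]
          ring

theorem stmt8 (j k : ℕ) (x : ℝ) (hx : 1 < x) (s : ℂ) (hs : s ≠ 0)
    (ρ : ℝ) (hρ : 0 < ρ) (hρs : ρ < ‖s‖) :
    (1 / (2 * Real.pi * I)) *
        (∮ u in C(0, ρ), (x : ℂ) ^ u / ((u + s) ^ (j + 1) * u ^ (k + 1)))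
      = ∑ l ∈ Finset.range (k + 1),
          (-1) ^ l * (Nat.choose (j + l) j : ℂ) * (Real.log x) ^ (k - l) /
            (s ^ (j + l + 1) * (Nat.factorial (k - l))) := by
  rw [lemMain' hx hs hρ hρs j k, one_div, inv_mul_cancel_left₀ Complex.two_pi_I_ne_zero]
  rfl
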